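/- arXiv:1006.3377 — 6 statements merged into one kernel-verified Lean document; each statement's English description precedes it below -/
import Mathlib

section
/- Let G be a finite group, let p be an odd prime, and let g ∈ G be an element whose centralizer C_G(g) is a p-group. If g is conjugate in G to g⁻¹, then there exists x ∈ G with x² = 1 and x⁻¹ g x = g⁻¹. -/
/-- If `g` is a real element of a finite group whose centralizer is a `p`-group
for an odd prime `p`, then `g` is inverted by an element of order at most 2. -/
theorem real_with_pgroup_centralizer_strongly_real {G : Type*} [Group G] [Finite G]
    (p : ℕ) (hp : p.Prime) (hodd : Odd p) (g : G)
    (hc : IsPGroup p (Subgroup.centralizer {g}))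
    (hreal : ∃ y : G, y⁻¹ * g * y = g⁻¹) :
    ∃ x : G, x ^ 2 = 1 ∧ x⁻¹ * g * x = g⁻¹ := by
  obtain ⟨y, hy⟩ := hreal
  have h1 : g * y = y * g⁻¹ := by
    calc g * y = y * (y⁻¹ * g * y) := by group
      _ = y * g⁻¹ := by rw [hy]
  have h2' : y⁻¹ * g⁻¹ * y = g := by
    have := congrArg Inv.inv hy
    simpa [mul_assoc] using this
  have h2 : g⁻¹ * y = y * g := by
    calc g⁻¹ * y = y * (y⁻¹ * g⁻¹ * y) := by group
      _ = y * g := by rw [h2']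
  have hcomm : Commute g (y ^ 2) := by
    show g * y ^ 2 = y ^ 2 * g
    calc g * y ^ 2 = g * y * y := by rw [pow_two, mul_assoc]
      _ = y * (g⁻¹ * y) := by rw [h1, mul_assoc]
      _ = y * (y * g) := by rw [h2]
      _ = y ^ 2 * g := by rw [pow_two, mul_assoc]
  have hmem : y ^ 2 ∈ Subgroup.centralizer {g} := by
    rw [Subgroup.mem_centralizer_singleton_iff]
    exact hcomm.symm.eq
  obtain ⟨n, hn⟩ := hc ⟨y ^ 2, hmem⟩
  have hn' : (y ^ 2) ^ p ^ n = 1 := by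
    have := congrArg (Subtype.val) hn
    simpa using this
  obtain ⟨k, hk⟩ := hodd.pow (n := n)
  refine ⟨y ^ p ^ n, ?_, ?_⟩
  · calc (y ^ p ^ n) ^ 2 = (y ^ 2) ^ p ^ n := by
          rw [← pow_mul, ← pow_mul, mul_comm]
      _ = 1 := hn'
  · have hx : y ^ p ^ n = (y ^ 2) ^ k * y := by
      rw [hk, pow_add, pow_mul, pow_one]
    have hc2 : Commute g ((y ^ 2) ^ k) := hcomm.pow_right k
    rw [hx]
    calc ((y ^ 2) ^ k * y)⁻¹ * g * ((y ^ 2) ^ k * y)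
        = y⁻¹ * (((y ^ 2) ^ k)⁻¹ * g * (y ^ 2) ^ k) * y := by group
      _ = y⁻¹ * g * y := by
          have : ((y ^ 2) ^ k)⁻¹ * g * (y ^ 2) ^ k = g := by
            rw [mul_assoc, hc2.eq]; group
          rw [this]
      _ = g⁻¹ := hy
end

section
/- Let q be a prime power and let F be a finite field with q elements. Then the projective special linear group PSL₂(F) = SL₂(F)/Z(SL₂(F)) is strongly real (every element is conjugate to its inverse by an involution) if and only if q ≢ 3 (mod 4). -/
open Matrix

section Psl2Aux
set_option linter.unusedSectionVars false

variable {F : Type*} [Field F] [DecidableEq F]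

private lemma fin2_ext' {a b c d e f g h : F} (h1 : a = e) (h2 : b = f) (h3 : c = g) (h4 : d = h) :
    !![a,b;c,d] = !![e,f;g,h] := by rw [h1,h2,h3,h4]

private lemma fin2_entries {a b c d e f g h : F} (H : !![a,b;c,d] = !![e,f;g,h]) :
    a = e ∧ b = f ∧ c = g ∧ d = h := by
  refine ⟨?_, ?_, ?_, ?_⟩
  · simpa using congrFun (congrFun H 0) 0
  · simpa using congrFun (congrFun H 0) 1
  · simpa using congrFun (congrFun H 1) 0
  · simpa using congrFun (congrFun H 1) 1

private lemma gtg (p r s u a b c : F) (hdet : p*u - r*s = 1)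
    (h1 : a*(p-u) + b*s + c*r = 0) :
    !![p,r;s,u] * !![a,b;c,-a] * !![p,r;s,u] = !![a,b;c,-a] := by
  rw [Matrix.mul_fin_two, Matrix.mul_fin_two]
  apply fin2_ext'
  · linear_combination p*h1 + a*hdet
  · linear_combination r*h1 + b*hdet
  · linear_combination s*h1 + c*hdet
  · linear_combination u*h1 - a*hdet

private lemma tt (a b c : F) (h2 : a*a + b*c = -1) :
    !![a,b;c,-a] * !![a,b;c,-a] = !![-1,0;0,-1] := by
  rw [Matrix.mul_fin_two]
  apply fin2_ext'
  · linear_combination h2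
  · ring
  · ring
  · linear_combination h2

private lemma scalar_fin_two (x : F) : (Matrix.scalar (Fin 2)) x = !![x,0;0,x] := by
  ext i j
  fin_cases i <;> fin_cases j <;> simp [Matrix.scalar]

/-- key helper: given a solution (a,b,c) of the linear + quadratic conditions,
produce the inverting involution in PSL₂. -/
private lemma good (G : Matrix.SpecialLinearGroup (Fin 2) F) (a b c : F)
    (h1 : a * ((G : Matrix (Fin 2) (Fin 2) F) 0 0 - (G : Matrix (Fin 2) (Fin 2) F) 1 1)
        + b * (G : Matrix (Fin 2) (Fin 2) F) 1 0 + c * (G : Matrix (Fin 2) (Fin 2) F) 0 1 = 0)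
    (h2 : a * a + b * c = -1)
    (hnc : b ≠ 0 ∨ c ≠ 0 ∨ (2 : F) ≠ 0) :
    ∃ t : Matrix.ProjectiveSpecialLinearGroup (Fin 2) F,
      t ^ 2 = 1 ∧ t ≠ 1 ∧
        t⁻¹ * ((QuotientGroup.mk G : Matrix.ProjectiveSpecialLinearGroup (Fin 2) F))
          * t = (QuotientGroup.mk G : Matrix.ProjectiveSpecialLinearGroup (Fin 2) F)⁻¹ := by
  set p := (G : Matrix (Fin 2) (Fin 2) F) 0 0 with hp
  set r := (G : Matrix (Fin 2) (Fin 2) F) 0 1 with hr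
  set s := (G : Matrix (Fin 2) (Fin 2) F) 1 0 with hs
  set u := (G : Matrix (Fin 2) (Fin 2) F) 1 1 with hu
  have hGmat : (G : Matrix (Fin 2) (Fin 2) F) = !![p,r;s,u] := by
    rw [hp, hr, hs, hu]; exact Matrix.eta_fin_two _
  have hdet : p * u - r * s = 1 := by
    have := G.property
    rwa [Matrix.det_fin_two] at this
  set T : Matrix.SpecialLinearGroup (Fin 2) F := ⟨!![a,b;c,-a], by
      rw [Matrix.det_fin_two_of]; linear_combination -h2⟩ with hTdef
  set N : Matrix.SpecialLinearGroup (Fin 2) F :=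
      ⟨!![(-1 : F),0;0,-1], by simp [Matrix.det_fin_two_of]⟩ with hNdef
  have hTmat : (T : Matrix (Fin 2) (Fin 2) F) = !![a,b;c,-a] := rfl
  have hTT : T * T = N := by
    apply Subtype.ext
    rw [Matrix.SpecialLinearGroup.coe_mul, hTmat]
    exact tt a b c h2
  have hNc : N ∈ Subgroup.center (Matrix.SpecialLinearGroup (Fin 2) F) := by
    rw [Matrix.SpecialLinearGroup.mem_center_iff]
    exact ⟨-1, by norm_num, by rw [scalar_fin_two]⟩
  refine ⟨QuotientGroup.mk T, ?_, ?_, ?_⟩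
  case refine_1 =>
    rw [pow_two, ← QuotientGroup.mk_mul, hTT, QuotientGroup.eq_one_iff]
    exact hNc
  case refine_2 =>
    rw [Ne, QuotientGroup.eq_one_iff, Matrix.SpecialLinearGroup.mem_center_iff]
    rintro ⟨x, hx1, hx2⟩
    rw [scalar_fin_two] at hx2
    obtain ⟨e1, e2, e3, e4⟩ := fin2_entries (hx2 : !![x,0;0,x] = !![a,b;c,-a])
    rcases hnc with hb | hc | h2F
    · exact hb e2.symm
    · exact hc e3.symm
    · have ha : a = 0 := by
        have h2a : (2 : F) * a = 0 := by linear_combination e4 - e1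
        rcases mul_eq_zero.mp h2a with h | h
        · exact absurd h h2F
        · exact h
      rw [← e2, ha] at h2
      norm_num at h2
  case refine_3 =>
    have hSL : G * T * G = T := by
      apply Subtype.ext
      rw [Matrix.SpecialLinearGroup.coe_mul, Matrix.SpecialLinearGroup.coe_mul, hTmat, hGmat]
      exact gtg p r s u a b c hdet h1
    have hq : (QuotientGroup.mk G : Matrix.ProjectiveSpecialLinearGroup (Fin 2) F)
        * QuotientGroup.mk T * QuotientGroup.mk G = QuotientGroup.mk T := by
      rw [← QuotientGroup.mk_mul, ← QuotientGroup.mk_mul, hSL]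
    set g : Matrix.ProjectiveSpecialLinearGroup (Fin 2) F := QuotientGroup.mk G
    set t : Matrix.ProjectiveSpecialLinearGroup (Fin 2) F := QuotientGroup.mk T
    calc t⁻¹ * g * t = t⁻¹ * (g * t * g) * g⁻¹ := by group
    _ = t⁻¹ * t * g⁻¹ := by rw [hq]
    _ = g⁻¹ := by group

end Psl2Aux
/-- `PSL₂(F_q)` is strongly real if and only if `q ≢ 3 (mod 4)`. -/
theorem psl2_strongly_real_iff {q : ℕ} (hq : IsPrimePow q)
    (F : Type*) [Field F] [Fintype F] [DecidableEq F] (hF : Fintype.card F = q) :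
    (∀ g : ProjectiveSpecialLinearGroup (Fin 2) F,
        ∃ t : ProjectiveSpecialLinearGroup (Fin 2) F,
          t ^ 2 = 1 ∧ t ≠ 1 ∧ t⁻¹ * g * t = g⁻¹) ↔ q % 4 ≠ 3 := by
  constructor
  · -- strongly real → q % 4 ≠ 3
    intro hsr h3
    have hns : ¬ IsSquare (-1 : F) := by
      rw [FiniteField.isSquare_neg_one_iff, hF]
      exact fun hc => hc h3
    have h2F : (2 : F) ≠ 0 := by
      intro h
      exact hns (by
        have : (-1 : F) = 1 := by linear_combination -h
        rw [this]; exact ⟨1, (mul_one 1).symm⟩)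
    set G : Matrix.SpecialLinearGroup (Fin 2) F :=
      ⟨!![1,1;0,1], by simp [Matrix.det_fin_two_of]⟩ with hGdef
    obtain ⟨t, ht2, ht1, htc⟩ := hsr (QuotientGroup.mk G)
    obtain ⟨T, rfl⟩ := QuotientGroup.mk_surjective t
    have hq1 : (QuotientGroup.mk G : Matrix.ProjectiveSpecialLinearGroup (Fin 2) F)
        * QuotientGroup.mk T * QuotientGroup.mk G = QuotientGroup.mk T := by
      set g : Matrix.ProjectiveSpecialLinearGroup (Fin 2) F := QuotientGroup.mk G
      set t : Matrix.ProjectiveSpecialLinearGroup (Fin 2) F := QuotientGroup.mk T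
      calc g * t * g = t * (t⁻¹ * g * t) * g := by group
      _ = t * g⁻¹ * g := by rw [htc]
      _ = t := by group
    have hq2 : (QuotientGroup.mk (G * T * G) :
        Matrix.ProjectiveSpecialLinearGroup (Fin 2) F) = QuotientGroup.mk T := by
      rw [QuotientGroup.mk_mul, QuotientGroup.mk_mul]; exact hq1
    rw [QuotientGroup.eq, Matrix.SpecialLinearGroup.mem_center_iff] at hq2
    obtain ⟨x, hx1, hx2⟩ := hq2
    have hxx : x = 1 ∨ x = -1 := by
      rw [Fintype.card_fin, pow_two] at hx1
      exact mul_self_eq_one_iff.mp hx1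
    have hx2' : (((G*T*G)⁻¹ * T : Matrix.SpecialLinearGroup (Fin 2) F) :
        Matrix (Fin 2) (Fin 2) F) = !![x,0;0,x] := by
      rw [← hx2]; exact scalar_fin_two x
    set a := (T : Matrix (Fin 2) (Fin 2) F) 0 0 with ha
    set b := (T : Matrix (Fin 2) (Fin 2) F) 0 1 with hb
    set c := (T : Matrix (Fin 2) (Fin 2) F) 1 0 with hc
    set d := (T : Matrix (Fin 2) (Fin 2) F) 1 1 with hd
    have hTmat : (T : Matrix (Fin 2) (Fin 2) F) = !![a,b;c,d] := by
      rw [ha, hb, hc, hd]; exact Matrix.eta_fin_two _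
    have hdetT : a * d - b * c = 1 := by
      have := T.property
      rwa [Matrix.det_fin_two] at this
    have hGm : (G : Matrix (Fin 2) (Fin 2) F) = !![1,1;0,1] := rfl
    have hgrp : T = (G * T * G) * ((G * T * G)⁻¹ * T) := by group
    have hxm : !![a,b;c,d] =
        (!![1,1;0,1] * !![a,b;c,d] * !![1,1;0,1]) * !![x,0;0,x] := by
      calc !![a,b;c,d] = (T : Matrix (Fin 2) (Fin 2) F) := hTmat.symm
      _ = ↑((G * T * G) * ((G * T * G)⁻¹ * T)) := by rw [← hgrp]
      _ = (↑(G * T * G) : Matrix (Fin 2) (Fin 2) F) * ↑((G * T * G)⁻¹ * T) :=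
          Matrix.SpecialLinearGroup.coe_mul _ _
      _ = (!![1,1;0,1] * !![a,b;c,d] * !![1,1;0,1]) * !![x,0;0,x] := by
          rw [hx2', Matrix.SpecialLinearGroup.coe_mul, Matrix.SpecialLinearGroup.coe_mul,
            hTmat, hGm]
    rw [Matrix.mul_fin_two, Matrix.mul_fin_two, Matrix.mul_fin_two] at hxm
    obtain ⟨e1, e2, e3, e4⟩ := fin2_entries hxm
    rcases hxx with hx | hx
    · -- x = 1 forces -a² = 1
      rw [hx] at e1 e2
      have hc0 : c = 0 := by linear_combination -e1
      have hd0 : d = -a := by linear_combination e1 - e2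
      apply hns
      refine ⟨a, ?_⟩
      rw [hc0, hd0] at hdetT
      linear_combination hdetT
    · -- x = -1 forces det = 0
      rw [hx] at e1 e3 e4
      have hc0 : c = 0 := by
        rcases mul_eq_zero.mp (show (2:F) * c = 0 by linear_combination e3) with h | h
        · exact absurd h h2F
        · exact h
      have ha0 : a = 0 := by
        rcases mul_eq_zero.mp (show (2:F) * a = 0 by linear_combination e1 - hc0) with h | h
        · exact absurd h h2F
        · exact h
      have hd0 : d = 0 := by
        rcases mul_eq_zero.mp (show (2:F) * d = 0 by linear_combination e4 - hc0) with h | h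
        · exact absurd h h2F
        · exact h
      rw [ha0, hc0, hd0] at hdetT
      norm_num at hdetT
  · -- q % 4 ≠ 3 → strongly real
    intro h3 g
    have hi' : IsSquare (-1 : F) := by
      rw [FiniteField.isSquare_neg_one_iff, hF]; exact h3
    obtain ⟨i, hi⟩ := hi'
    have hi0 : i ≠ 0 := by
      intro h
      rw [h, mul_zero] at hi
      exact (by norm_num : (-1 : F) ≠ 0) hi
    refine QuotientGroup.induction_on g ?_
    intro G
    by_cases hs0 : (G : Matrix (Fin 2) (Fin 2) F) 1 0 = 0
    · by_cases hr0 : (G : Matrix (Fin 2) (Fin 2) F) 0 1 = 0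
      · -- diagonal
        exact good G 0 1 (-1) (by rw [hs0, hr0]; ring) (by norm_num) (Or.inl one_ne_zero)
      · by_cases hpu : (G : Matrix (Fin 2) (Fin 2) F) 0 0 = (G : Matrix (Fin 2) (Fin 2) F) 1 1
        · by_cases h2F : (2 : F) = 0
          · -- char 2, p = u, s = 0, r ≠ 0 : T from (p, r, 0)
            refine good G ((G : Matrix (Fin 2) (Fin 2) F) 0 0)
              ((G : Matrix (Fin 2) (Fin 2) F) 0 1) 0 ?_ ?_ (Or.inl hr0)
            · linear_combination ((G : Matrix (Fin 2) (Fin 2) F) 0 0) * hpu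
                + ((G : Matrix (Fin 2) (Fin 2) F) 0 1) * hs0
            · have hdet : (G : Matrix (Fin 2) (Fin 2) F) 0 0 * (G : Matrix (Fin 2) (Fin 2) F) 1 1
                  - (G : Matrix (Fin 2) (Fin 2) F) 0 1 * (G : Matrix (Fin 2) (Fin 2) F) 1 0 = 1 := by
                have := G.property; rwa [Matrix.det_fin_two] at this
              linear_combination ((G : Matrix (Fin 2) (Fin 2) F) 0 0) * hpu + hdet
                + ((G : Matrix (Fin 2) (Fin 2) F) 0 1) * hs0 + h2F
          · -- p = u, 2 ≠ 0 : T from (i, 0, 0)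
            exact good G i 0 0 (by rw [hpu]; ring) (by linear_combination -hi)
              (Or.inr (Or.inr h2F))
        · -- p ≠ u, s = 0, r ≠ 0 : (i, 0, -(i*(p-u))/r)
          refine good G i 0
            (-(i * ((G : Matrix (Fin 2) (Fin 2) F) 0 0 - (G : Matrix (Fin 2) (Fin 2) F) 1 1))
              / (G : Matrix (Fin 2) (Fin 2) F) 0 1) ?_ ?_ ?_
          · field_simp; ring
          · field_simp
            linear_combination -((G : Matrix (Fin 2) (Fin 2) F) 0 1) * hi
          · refine Or.inr (Or.inl ?_)
            rw [neg_div, neg_ne_zero]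
            exact div_ne_zero (mul_ne_zero hi0 (sub_ne_zero.mpr hpu)) hr0
    · by_cases hpu : (G : Matrix (Fin 2) (Fin 2) F) 0 0 = (G : Matrix (Fin 2) (Fin 2) F) 1 1
      · by_cases h2F : (2 : F) = 0
        · -- char 2, p = u, s ≠ 0 : T from (p, r, s)
          refine good G ((G : Matrix (Fin 2) (Fin 2) F) 0 0)
            ((G : Matrix (Fin 2) (Fin 2) F) 0 1)
            ((G : Matrix (Fin 2) (Fin 2) F) 1 0) ?_ ?_ (Or.inr (Or.inl hs0))
          · linear_combination ((G : Matrix (Fin 2) (Fin 2) F) 0 0) * hpu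
              + ((G : Matrix (Fin 2) (Fin 2) F) 0 1) * ((G : Matrix (Fin 2) (Fin 2) F) 1 0) * h2F
          · have hdet : (G : Matrix (Fin 2) (Fin 2) F) 0 0 * (G : Matrix (Fin 2) (Fin 2) F) 1 1
                - (G : Matrix (Fin 2) (Fin 2) F) 0 1 * (G : Matrix (Fin 2) (Fin 2) F) 1 0 = 1 := by
              have := G.property; rwa [Matrix.det_fin_two] at this
            linear_combination ((G : Matrix (Fin 2) (Fin 2) F) 0 0) * hpu + hdet
              + (((G : Matrix (Fin 2) (Fin 2) F) 0 1) * ((G : Matrix (Fin 2) (Fin 2) F) 1 0) + 1) * h2F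
        · -- p = u, 2 ≠ 0 : (i, 0, 0)
          exact good G i 0 0 (by rw [hpu]; ring) (by linear_combination -hi)
            (Or.inr (Or.inr h2F))
      · -- p ≠ u, s ≠ 0 : (i, -(i*(p-u))/s, 0)
        refine good G i
          (-(i * ((G : Matrix (Fin 2) (Fin 2) F) 0 0 - (G : Matrix (Fin 2) (Fin 2) F) 1 1))
            / (G : Matrix (Fin 2) (Fin 2) F) 1 0) 0 ?_ ?_ ?_
        · field_simp; ring
        · field_simp
          linear_combination -((G : Matrix (Fin 2) (Fin 2) F) 1 0) * hi
        · refine Or.inl ?_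
          rw [neg_div, neg_ne_zero]
          exact div_ne_zero (mul_ne_zero hi0 (sub_ne_zero.mpr hpu)) hs0
end

section
/- Let q be a prime power and let F be a finite field with q elements. Then the projective general linear group PGL₂(F) = GL₂(F)/Z(GL₂(F)) is strongly real: every element of PGL₂(F) is conjugate to its inverse by an involution of PGL₂(F). -/
open Matrix

section Aux

variable {F : Type*} [Field F] [DecidableEq F]

private lemma scalar_mem_center (r : F) (u : GeneralLinearGroup (Fin 2) F)
    (hu : (u : Matrix (Fin 2) (Fin 2) F) = r • 1) :
    u ∈ Subgroup.center (GeneralLinearGroup (Fin 2) F) := by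
  rw [Subgroup.mem_center_iff]
  intro g
  refine Units.ext ?_
  rw [Units.val_mul, Units.val_mul, hu]
  simp [mul_smul_comm, smul_mul_assoc]

private def matE : GeneralLinearGroup (Fin 2) F :=
  ⟨!![1, 1; 0, 1], !![1, -1; 0, 1], by
    ext i j; fin_cases i <;> fin_cases j <;>
      simp [Matrix.mul_apply, Fin.sum_univ_two, Matrix.one_apply], by
    ext i j; fin_cases i <;> fin_cases j <;>
      simp [Matrix.mul_apply, Fin.sum_univ_two, Matrix.one_apply]⟩

private def matE' : GeneralLinearGroup (Fin 2) F :=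
  ⟨!![1, 0; 1, 1], !![1, 0; -1, 1], by
    ext i j; fin_cases i <;> fin_cases j <;>
      simp [Matrix.mul_apply, Fin.sum_univ_two, Matrix.one_apply], by
    ext i j; fin_cases i <;> fin_cases j <;>
      simp [Matrix.mul_apply, Fin.sum_univ_two, Matrix.one_apply]⟩

private lemma offdiag_not_mem_center (u : GeneralLinearGroup (Fin 2) F)
    (h : (u : Matrix (Fin 2) (Fin 2) F) 0 1 ≠ 0 ∨ (u : Matrix (Fin 2) (Fin 2) F) 1 0 ≠ 0) :
    u ∉ Subgroup.center (GeneralLinearGroup (Fin 2) F) := by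
  intro hmem
  rw [Subgroup.mem_center_iff] at hmem
  rcases h with h | h
  · have h1 := congrArg Units.val (hmem matE')
    have h2 := congrFun (congrFun h1 0) 0
    simp [matE', Units.val_mul, Matrix.mul_apply, Fin.sum_univ_two] at h2
    exact h h2
  · have h1 := congrArg Units.val (hmem matE)
    have h2 := congrFun (congrFun h1 0) 0
    simp [matE, Units.val_mul, Matrix.mul_apply, Fin.sum_univ_two] at h2
    exact h h2

private lemma key_solve (a b c d : F) :
    ∃ x y z : F, (a - d) * x + b * z + c * y = 0 ∧ -(x * x) - y * z ≠ 0 ∧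
      (y ≠ 0 ∨ z ≠ 0) := by
  by_cases hb : b = 0
  · by_cases hc : c = 0
    · exact ⟨0, 1, 1, by rw [hb, hc]; ring, by simpa using one_ne_zero, Or.inl one_ne_zero⟩
    · by_cases had : a = d
      · exact ⟨1, 0, 1, by rw [had, hb]; ring, by norm_num, Or.inr one_ne_zero⟩
      · have hsub : a - d ≠ 0 := sub_ne_zero.mpr had
        have hsub' : d - a ≠ 0 := sub_ne_zero.mpr (Ne.symm had)
        refine ⟨1, -(a - d) / c, 0, by rw [hb]; field_simp; ring, by norm_num, Or.inl ?_⟩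
        simp [div_eq_zero_iff, hsub', hc]
  · by_cases hc : c = 0
    · by_cases had : a = d
      · exact ⟨1, 1, 0, by rw [had, hc]; ring, by norm_num, Or.inl one_ne_zero⟩
      · have hsub : a - d ≠ 0 := sub_ne_zero.mpr had
        have hsub' : d - a ≠ 0 := sub_ne_zero.mpr (Ne.symm had)
        refine ⟨1, 0, -(a - d) / b, by rw [hc]; field_simp; ring, by norm_num, Or.inr ?_⟩
        simp [div_eq_zero_iff, hsub', hb]
    · refine ⟨0, 1, -c / b, by field_simp; ring, ?_, Or.inl one_ne_zero⟩
      simp only [mul_zero, neg_zero, zero_sub, one_mul, neg_neg]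
      simp [div_eq_zero_iff, hb, hc]

end Aux

/-- The projective general linear group `PGL₂(F) = GL₂(F)/Z(GL₂(F))`. -/
abbrev ProjectiveGeneralLinearGroup2 (F : Type*) [Field F] [DecidableEq F] : Type _ :=
  GeneralLinearGroup (Fin 2) F ⧸ Subgroup.center (GeneralLinearGroup (Fin 2) F)

/-- `PGL₂(F_q)` is strongly real: every element is conjugate to its inverse by an
involution. -/
theorem pgl2_strongly_real {q : ℕ} (hq : IsPrimePow q)
    (F : Type*) [Field F] [Fintype F] [DecidableEq F] (hF : Fintype.card F = q) :
    ∀ g : ProjectiveGeneralLinearGroup2 F,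
      ∃ t : ProjectiveGeneralLinearGroup2 F,
        t ^ 2 = 1 ∧ t ≠ 1 ∧ t⁻¹ * g * t = g⁻¹ := by
  intro g
  obtain ⟨Au, rfl⟩ := QuotientGroup.mk_surjective g
  set A : Matrix (Fin 2) (Fin 2) F := (Au : Matrix (Fin 2) (Fin 2) F) with hA
  obtain ⟨x, y, z, hE1, hE2, hE3⟩ := key_solve (A 0 0) (A 0 1) (A 1 0) (A 1 1)
  set T : Matrix (Fin 2) (Fin 2) F := !![x, y; z, -x] with hT
  have hdetT : T.det ≠ 0 := by
    rw [hT, Matrix.det_fin_two_of]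
    convert hE2 using 1; ring
  have hTunit : IsUnit T := (Matrix.isUnit_iff_isUnit_det T).mpr (isUnit_iff_ne_zero.mpr hdetT)
  obtain ⟨tu, htu⟩ := hTunit
  have hAeta : A = !![A 0 0, A 0 1; A 1 0, A 1 1] := Matrix.eta_fin_two A
  -- T * T is scalar
  have hTT : T * T = (x * x + y * z) • (1 : Matrix (Fin 2) (Fin 2) F) := by
    rw [hT]
    ext i j
    fin_cases i <;> fin_cases j <;>
      (simp [Matrix.mul_apply, Fin.sum_univ_two, Matrix.one_apply]; try ring)
  -- A * T * A = det A • T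
  have hATA : A * T * A = (A 0 0 * A 1 1 - A 0 1 * A 1 0) • T := by
    ext i j
    fin_cases i <;> fin_cases j
    · rw [hAeta, hT]; simp [Matrix.mul_apply, Fin.sum_univ_two]
      linear_combination (A 0 0) * hE1
    · rw [hAeta, hT]; simp [Matrix.mul_apply, Fin.sum_univ_two]
      linear_combination (A 0 1) * hE1
    · rw [hAeta, hT]; simp [Matrix.mul_apply, Fin.sum_univ_two]
      linear_combination (A 1 0) * hE1
    · rw [hAeta, hT]; simp [Matrix.mul_apply, Fin.sum_univ_two]
      linear_combination (A 1 1) * hE1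
  refine ⟨QuotientGroup.mk tu, ?_, ?_, ?_⟩
  · rw [← QuotientGroup.mk_pow, QuotientGroup.eq_one_iff]
    refine scalar_mem_center (x * x + y * z) _ ?_
    rw [pow_two, Units.val_mul, htu, hTT]
  · rw [Ne, QuotientGroup.eq_one_iff]
    apply offdiag_not_mem_center
    rw [htu, hT]
    simpa using hE3
  · have hcentral : tu⁻¹ * Au * tu * Au ∈
        Subgroup.center (GeneralLinearGroup (Fin 2) F) := by
      refine scalar_mem_center (A 0 0 * A 1 1 - A 0 1 * A 1 0) _ ?_
      have hcan : T * (↑(tu⁻¹ * Au * tu * Au) : Matrix (Fin 2) (Fin 2) F) =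
          T * ((A 0 0 * A 1 1 - A 0 1 * A 1 0) • (1 : Matrix (Fin 2) (Fin 2) F)) := by
        have h1 : tu * (tu⁻¹ * Au * tu * Au) = Au * tu * Au := by group
        calc T * (↑(tu⁻¹ * Au * tu * Au) : Matrix (Fin 2) (Fin 2) F)
            = (↑(tu * (tu⁻¹ * Au * tu * Au)) : Matrix (Fin 2) (Fin 2) F) := by
              simp only [Units.val_mul, htu]
          _ = (↑(Au * tu * Au) : Matrix (Fin 2) (Fin 2) F) := by rw [h1]
          _ = A * T * A := by simp only [Units.val_mul, htu, ← hA]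
          _ = (A 0 0 * A 1 1 - A 0 1 * A 1 0) • T := hATA
          _ = T * ((A 0 0 * A 1 1 - A 0 1 * A 1 0) • (1 : Matrix (Fin 2) (Fin 2) F)) := by
              rw [mul_smul_comm, mul_one]
      exact ((Matrix.isUnit_iff_isUnit_det T).mpr
        (isUnit_iff_ne_zero.mpr hdetT)).mul_left_cancel hcan
    have hone : ((QuotientGroup.mk tu : ProjectiveGeneralLinearGroup2 F))⁻¹ *
        QuotientGroup.mk Au * QuotientGroup.mk tu * QuotientGroup.mk Au = 1 := by
      rw [← QuotientGroup.mk_inv, ← QuotientGroup.mk_mul, ← QuotientGroup.mk_mul,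
        ← QuotientGroup.mk_mul, QuotientGroup.eq_one_iff]
      exact hcentral
    exact eq_inv_of_mul_eq_one_left hone
end

section
/- Every element of the alternating group A₁₀ on 10 letters is a product of two involutions of A₁₀, and every element of the alternating group A₁₄ on 14 letters is a product of two involutions of A₁₄. -/
set_option maxRecDepth 1000000
set_option linter.unusedSectionVars false

open Equiv Equiv.Perm Finset

namespace A1014

variable {α : Type*} [Fintype α] [DecidableEq α]


/-- sign bookkeeping weight -/
def fT (g : Perm α) : ℕ := (g.cycleType.map (fun k => k / 2)).sum

/-- `s` is a reversing involution for `g` supported inside `g`'s support. -/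
def Rev (g s : Perm α) : Prop :=
  s * g * s⁻¹ = g⁻¹ ∧ s ^ 2 = 1 ∧ s.support ⊆ g.support

lemma Rev.conj {g s : Perm α} (h : Rev g s) (m : Perm α) :
    Rev (m * g * m⁻¹) (m * s * m⁻¹) := by
  obtain ⟨h1, h2, h3⟩ := h
  refine ⟨?_, ?_, ?_⟩
  · calc (m*s*m⁻¹) * (m*g*m⁻¹) * (m*s*m⁻¹)⁻¹ = m * (s*g*s⁻¹) * m⁻¹ := by group
    _ = m * g⁻¹ * m⁻¹ := by rw [h1]
    _ = (m*g*m⁻¹)⁻¹ := by group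
  · calc (m*s*m⁻¹)^2 = m * s^2 * m⁻¹ := by rw [sq, sq]; group
    _ = 1 := by rw [h2]; group
  · rw [support_conj, support_conj]
    exact Finset.map_subset_map.2 h3

lemma rev_of_isConj {g₀ g : Perm α} {ε : ℤˣ} (hconj : IsConj g₀ g)
    (h : ∃ s, Rev g₀ s ∧ sign s = ε) : ∃ s, Rev g s ∧ sign s = ε := by
  obtain ⟨m, hm⟩ := isConj_iff.1 hconj
  obtain ⟨s₀, h₀, hε⟩ := h
  refine ⟨m * s₀ * m⁻¹, hm ▸ h₀.conj m, ?_⟩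
  rw [map_mul, map_mul, map_inv, hε, mul_comm _ ε, mul_assoc]
  simp

lemma rev_mul {g h s t : Perm α} (hd : g.Disjoint h) (hs : Rev g s) (ht : Rev h t) :
    Rev (g * h) (s * t) := by
  obtain ⟨hs1, hs2, hs3⟩ := hs
  obtain ⟨ht1, ht2, ht3⟩ := ht
  have hds : _root_.Disjoint g.support h.support := disjoint_iff_disjoint_support.1 hd
  have hdtg : Perm.Disjoint t g := disjoint_iff_disjoint_support.2
    (Finset.disjoint_of_subset_left ht3 hds.symm)
  have hdsh : Perm.Disjoint s h := disjoint_iff_disjoint_support.2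
    (Finset.disjoint_of_subset_left hs3 hds)
  have hdst : Perm.Disjoint s t := disjoint_iff_disjoint_support.2
    (Finset.disjoint_of_subset_left hs3 (Finset.disjoint_of_subset_right ht3 hds))
  refine ⟨?_, ?_, ?_⟩
  · have e1 : t * g = g * t := hdtg.commute.eq
    have e2 : s * h⁻¹ = h⁻¹ * s := (hdsh.commute.inv_right).eq
    calc (s*t) * (g*h) * (s*t)⁻¹ = s * (t*g) * h * t⁻¹ * s⁻¹ := by group
    _ = s * (g*t) * h * t⁻¹ * s⁻¹ := by rw [e1]
    _ = s * g * (t*h*t⁻¹) * s⁻¹ := by group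
    _ = s * g * h⁻¹ * s⁻¹ := by rw [ht1]
    _ = s * g * (h⁻¹ * s⁻¹) := by group
    _ = s * g * (s⁻¹ * h⁻¹) := by rw [hdsh.commute.inv_left.inv_right.symm.eq]
    _ = (s*g*s⁻¹) * h⁻¹ := by group
    _ = g⁻¹ * h⁻¹ := by rw [hs1]
    _ = (g*h)⁻¹ := by rw [← mul_inv_rev, hd.commute.eq]
  · have e : t * s = s * t := hdst.commute.symm.eq
    calc (s*t)^2 = s * (t*s) * t := by rw [sq]; group
    _ = s * (s*t) * t := by rw [e]
    _ = s^2 * t^2 := by rw [sq, sq]; group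
    _ = 1 := by rw [hs2, ht2, one_mul]
  · refine (support_mul_le s t).trans ?_
    rw [hd.support_mul]
    exact Finset.union_subset_union hs3 ht3

lemma rev_flavor {g s : Perm α} (h : Rev g s) : Rev g (g * s) := by
  obtain ⟨h1, h2, h3⟩ := h
  refine ⟨?_, ?_, ?_⟩
  · calc (g*s) * g * (g*s)⁻¹ = g * (s*g*s⁻¹) * g⁻¹ := by group
    _ = g * g⁻¹ * g⁻¹ := by rw [h1]
    _ = g⁻¹ := by group
  · calc (g*s)^2 = g * (s*g*s⁻¹) * s^2 := by rw [sq, sq]; group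
    _ = g * g⁻¹ * s^2 := by rw [h1]
    _ = 1 := by rw [h2]; group
  · exact (support_mul_le g s).trans (Finset.union_subset (subset_refl _) h3)

/-- canonical cycles with reversing involution of known sign -/
def CanCycle (α : Type*) [Fintype α] [DecidableEq α] : Prop :=
  ∀ k : ℕ, 2 ≤ k → k ≤ Fintype.card α →
    ∃ C R : Perm α, C.IsCycle ∧ C.support.card = k ∧ Rev C R ∧ sign R = (-1) ^ (k / 2)

/-- canonical pairs of equal cycles with a reversing involution of sign `(-1)^k` -/
def CanPair (α : Type*) [Fintype α] [DecidableEq α] : Prop :=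
  ∀ k : ℕ, 2 ≤ k → 2 * k ≤ Fintype.card α →
    ∃ D X : Perm α, D.cycleType = {k, k} ∧ Rev D X ∧ sign X = (-1) ^ k

lemma exists_rev (hcan : CanCycle α) (g : Perm α) :
    ∃ s, Rev g s ∧ sign s = (-1) ^ fT g := by
  induction g using cycle_induction_on with
  | base_one =>
      exact ⟨1, ⟨by simp, by simp, by simp⟩, by simp [fT]⟩
  | base_cycles σ hσ =>
      have hk2 : 2 ≤ σ.support.card := hσ.two_le_card_support
      have hkle : σ.support.card ≤ Fintype.card α := by
        simpa using Finset.card_le_univ σ.support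
      obtain ⟨C, R, hC, hCcard, hRev, hsign⟩ := hcan σ.support.card hk2 hkle
      refine rev_of_isConj (isConj_of_cycleType_eq ?_) ⟨R, hRev, ?_⟩
      · rw [hC.cycleType, hσ.cycleType, hCcard]
      · rw [hsign]
        congr 1
        simp [fT, hσ.cycleType]
  | induction_disjoint σ τ hd hσ ih1 ih2 =>
      obtain ⟨s, hs, hssign⟩ := ih1
      obtain ⟨t, ht, htsign⟩ := ih2
      refine ⟨s * t, rev_mul hd hs ht, ?_⟩
      rw [map_mul, hssign, htsign, ← pow_add]
      congr 1
      simp [fT, hd.cycleType_mul]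



lemma extract_cycle {g : Perm α} {k : ℕ} (hk : k ∈ g.cycleType) :
    ∃ c h : Perm α, g = c * h ∧ c.Disjoint h ∧ c.IsCycle ∧ c.support.card = k := by
  rw [cycleType_def, Multiset.mem_map] at hk
  obtain ⟨c, hc, hck⟩ := hk
  have hc' : c ∈ g.cycleFactorsFinset := hc
  have hcom : Commute c g := self_mem_cycle_factors_commute hc'
  refine ⟨c, g * c⁻¹, ?_, (disjoint_mul_inv_of_mem_cycleFactorsFinset hc').symm,
    (mem_cycleFactorsFinset_iff.1 hc').1, hck⟩
  have hg : c * (g * c⁻¹) = g := by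
    calc c * (g * c⁻¹) = (c * g) * c⁻¹ := by group
    _ = (g * c) * c⁻¹ := by rw [hcom.eq]
    _ = g := by group
  exact hg.symm

lemma extract_pair {g : Perm α} (hnd : ¬ g.cycleType.Nodup) :
    ∃ (c d h : Perm α) (k : ℕ), g = (c * d) * h ∧ c.Disjoint d ∧ (c * d).Disjoint h ∧
      c.IsCycle ∧ d.IsCycle ∧ c.support.card = k ∧ d.support.card = k := by
  rw [cycleType_def] at hnd
  have hnodup : g.cycleFactorsFinset.val.Nodup := g.cycleFactorsFinset.nodup
  rw [Multiset.nodup_map_iff_inj_on hnodup] at hnd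
  push_neg at hnd
  obtain ⟨c, hc, d, hd, hcard, hne⟩ := hnd
  have hc' : c ∈ g.cycleFactorsFinset := hc
  have hd' : d ∈ g.cycleFactorsFinset := hd
  have hdisj : c.Disjoint d := g.cycleFactorsFinset_pairwise_disjoint hc' hd' hne
  have hccom : Commute c g := self_mem_cycle_factors_commute hc'
  have hdcom : Commute d g := self_mem_cycle_factors_commute hd'
  have hd2 : d ∈ (g * c⁻¹).cycleFactorsFinset := by
    rw [cycleFactorsFinset_mul_inv_mem_eq_sdiff hc']
    exact Finset.mem_sdiff.2 ⟨hd', by simp [hne.symm]⟩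
  have h1 : Perm.Disjoint (g * c⁻¹ * d⁻¹) d :=
    disjoint_mul_inv_of_mem_cycleFactorsFinset hd2
  have h2 : Perm.Disjoint (g * c⁻¹ * d⁻¹) c :=
    ((disjoint_mul_inv_of_mem_cycleFactorsFinset hc').mul_left hdisj.symm.inv_left)
  refine ⟨c, d, g * c⁻¹ * d⁻¹, c.support.card, ?_, hdisj,
    (h2.symm).mul_left (h1.symm), (mem_cycleFactorsFinset_iff.1 hc').1,
    (mem_cycleFactorsFinset_iff.1 hd').1, rfl, hcard.symm⟩
  have : d * (g * c⁻¹) = (g * c⁻¹) * d := by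
    calc d * (g * c⁻¹) = (d * g) * c⁻¹ := by group
    _ = (g * d) * c⁻¹ := by rw [hdcom.eq]
    _ = g * (d * c⁻¹) := by group
    _ = g * (c⁻¹ * d) := by rw [(hdisj.symm.inv_right.commute).eq]
    _ = (g * c⁻¹) * d := by group
  have hg : c * (g * c⁻¹) = g := by
    calc c * (g * c⁻¹) = (c * g) * c⁻¹ := by group
    _ = (g * c) * c⁻¹ := by rw [hccom.eq]
    _ = g := by group
  have final : (c * d) * (g * c⁻¹ * d⁻¹) = g := by
    calc (c * d) * (g * c⁻¹ * d⁻¹) = c * ((d * (g * c⁻¹)) * d⁻¹) := by group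
    _ = c * (((g * c⁻¹) * d) * d⁻¹) := by rw [this]
    _ = c * (g * c⁻¹) := by group
    _ = g := hg
  exact final.symm



-- placeholders from previous parts
-- new content

lemma fT_mul_disjoint {c h : Perm α} (hd : c.Disjoint h) : fT (c * h) = fT c + fT h := by
  simp [fT, hd.cycleType_mul]

lemma fT_cycle {c : Perm α} (hc : c.IsCycle) : fT c = c.support.card / 2 := by
  simp [fT, hc.cycleType]

lemma sq_one_mul {a b : Perm α} (h : Commute a b) (ha : a ^ 2 = 1) (hb : b ^ 2 = 1) :
    (a * b) ^ 2 = 1 := by rw [h.mul_pow, ha, hb, one_mul]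

lemma rev_swap (hcp : CanPair α) {c d : Perm α} {k : ℕ} (hd : c.Disjoint d)
    (hc : c.IsCycle) (hdc : d.IsCycle) (hck : c.support.card = k) (hdk : d.support.card = k) :
    ∃ x, Rev (c * d) x ∧ sign x = (-1) ^ k := by
  have h2k : 2 ≤ k := hck ▸ hc.two_le_card_support
  have hsupp : (c * d).support.card = 2 * k := by
    rw [hd.support_mul, Finset.card_union_of_disjoint (disjoint_iff_disjoint_support.1 hd),
      hck, hdk]
    ring
  have hle : 2 * k ≤ Fintype.card α := by
    rw [← hsupp]; simpa using Finset.card_le_univ (c * d).support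
  obtain ⟨D, X, hD, hX, hsign⟩ := hcp k h2k hle
  refine rev_of_isConj (isConj_of_cycleType_eq ?_) ⟨X, hX, hsign⟩
  rw [hD, hd.cycleType_mul, hc.cycleType, hdc.cycleType, hck, hdk]
  rfl

lemma disjoint_swap {g : Perm α} {a b : α} (ha : a ∉ g.support) (hb : b ∉ g.support)
    (hab : a ≠ b) : Perm.Disjoint (Equiv.swap a b) g := by
  intro x
  by_cases hxa : x = a
  · subst hxa; exact Or.inr (notMem_support.1 ha)
  by_cases hxb : x = b
  · subst hxb; exact Or.inr (notMem_support.1 hb)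
  · exact Or.inl (Equiv.swap_apply_of_ne_of_ne hxa hxb)

lemma rev_fix {g s : Perm α} (hrev : Rev g s) {a b : α} (ha : a ∉ g.support)
    (hb : b ∉ g.support) (hab : a ≠ b) :
    (s * Equiv.swap a b) * g * (s * Equiv.swap a b)⁻¹ = g⁻¹ ∧ (s * Equiv.swap a b) ^ 2 = 1 ∧
      sign (s * Equiv.swap a b) = - sign s := by
  obtain ⟨h1, h2, h3⟩ := hrev
  have hdg : Perm.Disjoint (Equiv.swap a b) g := disjoint_swap ha hb hab
  have hds : Perm.Disjoint (Equiv.swap a b) s := disjoint_iff_disjoint_support.2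
    (Finset.disjoint_of_subset_right h3 (disjoint_iff_disjoint_support.1 hdg))
  refine ⟨?_, ?_, ?_⟩
  · have e1 : Equiv.swap a b * g = g * Equiv.swap a b := hdg.commute.eq
    calc (s * Equiv.swap a b) * g * (s * Equiv.swap a b)⁻¹
        = s * (Equiv.swap a b * g) * (Equiv.swap a b)⁻¹ * s⁻¹ := by group
    _ = s * (g * Equiv.swap a b) * (Equiv.swap a b)⁻¹ * s⁻¹ := by rw [e1]
    _ = s * g * s⁻¹ := by group
    _ = g⁻¹ := h1
  · exact sq_one_mul hds.commute.symm h2 (by rw [sq, Equiv.swap_mul_self])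
  · rw [map_mul, sign_swap hab, mul_neg_one]

lemma even_k_case (hcan : CanCycle α) {g : Perm α} {k : ℕ} (hf : ¬ Even (fT g))
    (hk : k ∈ g.cycleType) (hke : Even k) :
    ∃ s, s * g * s⁻¹ = g⁻¹ ∧ s ^ 2 = 1 ∧ sign s = 1 := by
  obtain ⟨c, h, rfl, hdisj, hc, hck⟩ := extract_cycle hk
  obtain ⟨sc, hrevc, hsignc⟩ := exists_rev hcan c
  obtain ⟨sh, hrevh, hsignh⟩ := exists_rev hcan h
  have hrev := rev_mul hdisj (rev_flavor hrevc) hrevh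
  refine ⟨(c * sc) * sh, hrev.1, hrev.2.1, ?_⟩
  have hsc : sign c = -1 := by
    rw [hc.sign, hck, hke.neg_one_pow]
  have hodd : Odd (fT (c * h)) := Nat.not_even_iff_odd.1 hf
  rw [map_mul, map_mul, hsc, hsignc, hsignh, mul_assoc, ← pow_add,
    ← fT_mul_disjoint hdisj, hodd.neg_one_pow]
  norm_num

lemma exists_even_rev (hcan : CanCycle α) (hcp : CanPair α) (g : Perm α)
    (hyp : Even (fT g) ∨ (∃ k ∈ g.cycleType, Even k) ∨ ¬ g.cycleType.Nodup ∨
      2 ≤ g.supportᶜ.card) :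
    ∃ s, s * g * s⁻¹ = g⁻¹ ∧ s ^ 2 = 1 ∧ sign s = 1 := by
  by_cases hf : Even (fT g)
  · obtain ⟨s, hs, hsign⟩ := exists_rev hcan g
    exact ⟨s, hs.1, hs.2.1, by rw [hsign, hf.neg_one_pow]⟩
  rcases hyp with h | h | h | h
  · exact absurd h hf
  · obtain ⟨k, hk, hke⟩ := h
    exact even_k_case hcan hf hk hke
  · obtain ⟨c, d, h', k, hg, hcd, hdisj, hc, hd, hck, hdk⟩ := extract_pair h
    by_cases hke : Even k
    · have hkmem : k ∈ g.cycleType := by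
        rw [hg, hdisj.cycleType_mul, hcd.cycleType_mul, hc.cycleType, hd.cycleType, hck, hdk]
        simp
      exact even_k_case hcan hf hkmem hke
    · subst hg
      obtain ⟨x, hx, hxsign⟩ := rev_swap hcp hcd hc hd hck hdk
      obtain ⟨sh, hrevh, hsignh⟩ := exists_rev hcan h'
      have hrev := rev_mul hdisj hx hrevh
      refine ⟨x * sh, hrev.1, hrev.2.1, ?_⟩
      have hfg : fT ((c * d) * h') = (k / 2 + k / 2) + fT h' := by
        rw [fT_mul_disjoint hdisj, fT_mul_disjoint hcd, fT_cycle hc, fT_cycle hd, hck, hdk]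
      have heven : Even (k + fT h') := by
        rw [Nat.even_iff] at hke ⊢
        rw [Nat.even_iff] at hf
        rw [hfg] at hf
        omega
      rw [map_mul, hxsign, hsignh, ← pow_add, heven.neg_one_pow]
  · obtain ⟨s, hs, hsign⟩ := exists_rev hcan g
    obtain ⟨a, ha, b, hb, hab⟩ := Finset.one_lt_card.1 h
    rw [Finset.mem_compl] at ha hb
    obtain ⟨e1, e2, e3⟩ := rev_fix hs ha hb hab
    refine ⟨s * Equiv.swap a b, e1, e2, ?_⟩
    rw [e3, hsign, (Nat.not_even_iff_odd.1 hf).neg_one_pow]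
    norm_num

lemma degenerate (hc6 : 6 ≤ Fintype.card α) {g : Perm α} (hg1 : g ≠ 1) (hg2 : g ^ 2 = 1)
    (hsg : sign g = 1) :
    ∃ s : Perm α, Commute s g ∧ s ^ 2 = 1 ∧ sign s = 1 ∧ s ≠ 1 ∧ s ≠ g := by
  have h2 : ∀ k ∈ g.cycleType, k = 2 := by
    intro k hk
    have hdvd : k ∣ 2 := by
      have h1 : k ∣ g.cycleType.lcm := Multiset.dvd_lcm hk
      rw [lcm_cycleType] at h1
      exact h1.trans (orderOf_dvd_of_pow_eq_one hg2)
    have hk2 := two_le_of_mem_cycleType hk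
    have := Nat.le_of_dvd (by norm_num) hdvd
    omega
  have hrep : g.cycleType = Multiset.replicate (Multiset.card g.cycleType) 2 :=
    Multiset.eq_replicate_card.2 h2
  have hcard0 : Multiset.card g.cycleType ≠ 0 := by
    rw [Ne, card_cycleType_eq_zero]; exact hg1
  have hsum : g.cycleType.sum = 2 * Multiset.card g.cycleType := by
    rw [hrep, Multiset.sum_replicate, Multiset.card_replicate, smul_eq_mul, mul_comm]
  have heven : Even (Multiset.card g.cycleType) := by
    rcases Nat.even_or_odd (g.cycleType.sum + Multiset.card g.cycleType) with he | ho
    · rw [Nat.even_iff] at he ⊢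
      rw [hsum] at he
      omega
    · exfalso
      have := sign_of_cycleType g
      rw [hsg, ho.neg_one_pow] at this
      exact absurd this (by norm_num)
  have hnd : ¬ g.cycleType.Nodup := by
    intro hnod
    have hcount := Multiset.nodup_iff_count_le_one.1 hnod 2
    rw [hrep, Multiset.count_replicate_self] at hcount
    rw [Nat.even_iff] at heven
    omega
  obtain ⟨c, d, h', k, hg, hcd, hdisj, hc, hd, hck, hdk⟩ := extract_pair hnd
  have hkmem : k ∈ g.cycleType := by
    rw [hg, hdisj.cycleType_mul, hcd.cycleType_mul, hc.cycleType, hd.cycleType, hck, hdk]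
    simp
  have hk2 : k = 2 := h2 k hkmem
  have hcorder : orderOf c = 2 := by rw [hc.orderOf, hck, hk2]
  have hdorder : orderOf d = 2 := by rw [hd.orderOf, hdk, hk2]
  have hc2 : c ^ 2 = 1 := by rw [← hcorder]; exact pow_orderOf_eq_one c
  have hd2 : d ^ 2 = 1 := by rw [← hdorder]; exact pow_orderOf_eq_one d
  have hsignc : sign c = -1 := by rw [hc.sign, hck, hk2]; norm_num
  have hsignd : sign d = -1 := by rw [hd.sign, hdk, hk2]; norm_num
  have hch' : Perm.Disjoint c h' := disjoint_iff_disjoint_support.2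
    (Finset.disjoint_of_subset_left (by rw [hcd.support_mul]; exact Finset.subset_union_left)
      (disjoint_iff_disjoint_support.1 hdisj))
  have hdh' : Perm.Disjoint d h' := disjoint_iff_disjoint_support.2
    (Finset.disjoint_of_subset_left (by rw [hcd.support_mul]; exact Finset.subset_union_right)
      (disjoint_iff_disjoint_support.1 hdisj))
  have hcomcg : Commute c g := by
    rw [hg]
    exact ((Commute.refl c).mul_right hcd.commute).mul_right hch'.commute
  have hcomdg : Commute d g := by
    rw [hg]
    exact ((hcd.commute.symm).mul_right (Commute.refl d)).mul_right hdh'.commute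
  by_cases hh : h' = 1
  · -- g = c * d : use c * swap of two fixed points
    rw [hh, mul_one] at hg
    have hsupp : g.support.card = 4 := by
      rw [hg, hcd.support_mul,
        Finset.card_union_of_disjoint (disjoint_iff_disjoint_support.1 hcd), hck, hdk, hk2]
    have hcompl : 2 ≤ g.supportᶜ.card := by
      have := Finset.card_compl g.support (α := α)
      omega
    obtain ⟨a, ha, b, hb, hab⟩ := Finset.one_lt_card.1 hcompl
    rw [Finset.mem_compl] at ha hb
    have hdswg : Perm.Disjoint (Equiv.swap a b) g := disjoint_swap ha hb hab
    have hsuppc : c.support ⊆ g.support := by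
      rw [hg, hcd.support_mul]; exact Finset.subset_union_left
    have hdswc : Perm.Disjoint (Equiv.swap a b) c := disjoint_iff_disjoint_support.2
      (Finset.disjoint_of_subset_right hsuppc (disjoint_iff_disjoint_support.1 hdswg))
    have hga : g a = a := notMem_support.1 ha
    have hcb : c b = b := notMem_support.1 (fun hmem => hb (hsuppc hmem))
    refine ⟨c * Equiv.swap a b, ?_, ?_, ?_, ?_, ?_⟩
    · exact hcomcg.mul_left hdswg.commute
    · exact sq_one_mul hdswc.commute.symm hc2 (by rw [sq, Equiv.swap_mul_self])
    · rw [map_mul, hsignc, sign_swap hab]; norm_num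
    · intro heq
      have : (c * Equiv.swap a b) a = a := by rw [heq]; rfl
      rw [Perm.mul_apply, Equiv.swap_apply_left] at this
      rw [hcb] at this
      exact hab this.symm
    · intro heq
      have : (c * Equiv.swap a b) a = g a := by rw [heq]
      rw [Perm.mul_apply, Equiv.swap_apply_left, hcb, hga] at this
      exact hab this.symm
  · -- h' ≠ 1 : use c * d
    refine ⟨c * d, ?_, ?_, ?_, ?_, ?_⟩
    · exact hcomcg.mul_left hcomdg
    · exact sq_one_mul hcd.commute hc2 hd2
    · rw [map_mul, hsignc, hsignd]; norm_num
    · intro heq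
      have hcnot : c ≠ 1 := hc.ne_one
      apply hcnot
      have hdinv : d = c⁻¹ := (inv_eq_of_mul_eq_one_right heq).symm
      ext x
      rcases hcd x with hx | hx
      · rw [hx]; rfl
      · rw [hdinv] at hx
        have : c x = x := by
          conv_lhs => rw [← hx]
          simp
        rw [this]; rfl
    · intro heq
      apply hh
      have : (c * d) * h' = (c * d) * 1 := by rw [mul_one, ← hg, ← heq]
      exact mul_left_cancel this


lemma multiset_arith (T : Multiset ℕ) (n : ℕ) (hn : n = 10 ∨ n = 14)
    (hodd : ∀ k ∈ T, k % 2 = 1) (h2le : ∀ k ∈ T, 2 ≤ k) (hnd : T.Nodup)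
    (hsumge : n - 1 ≤ T.sum) (hsumle : T.sum ≤ n) :
    (T.map (fun k => k / 2)).sum % 2 = 0 := by
  rcases hn with rfl | rfl <;>
  · rcases Nat.lt_or_ge (Multiset.card T) 3 with h3 | h3
    · rcases Nat.lt_or_ge (Multiset.card T) 1 with h0 | h1
      · have hT0 : T = 0 := Multiset.card_eq_zero.1 (show Multiset.card T = 0 by omega)
        subst hT0
        simp at hsumge
      · rcases Nat.lt_or_ge (Multiset.card T) 2 with h1' | h2'
        · obtain ⟨a, rfl⟩ := Multiset.card_eq_one.1 (show Multiset.card T = 1 by omega)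
          have ha := hodd a (Multiset.mem_singleton_self a)
          have ha2 := h2le a (Multiset.mem_singleton_self a)
          simp only [Multiset.map_singleton, Multiset.sum_singleton] at hsumge hsumle ⊢
          omega
        · obtain ⟨a, b, rfl⟩ := Multiset.card_eq_two.1 (show Multiset.card T = 2 by omega)
          have hab : a ≠ b := by
            rw [Multiset.insert_eq_cons, Multiset.nodup_cons] at hnd
            simpa using hnd.1
          have ha := hodd a (by simp)
          have hb := hodd b (by simp)
          have ha2 := h2le a (by simp)
          have hb2 := h2le b (by simp)
          simp only [Multiset.insert_eq_cons, Multiset.map_cons, Multiset.sum_cons,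
            Multiset.map_singleton, Multiset.sum_singleton] at hsumge hsumle ⊢
          omega
    · exfalso
      have hT0 : T ≠ 0 := by
        intro h0; rw [h0] at h3; simp at h3
      obtain ⟨a, ha⟩ := Multiset.exists_mem_of_ne_zero hT0
      obtain ⟨T1, rfl⟩ := Multiset.exists_cons_of_mem ha
      have hT10 : T1 ≠ 0 := by
        intro h0; rw [h0] at h3; simp at h3
      obtain ⟨b, hb⟩ := Multiset.exists_mem_of_ne_zero hT10
      obtain ⟨T2, rfl⟩ := Multiset.exists_cons_of_mem hb
      have hT20 : T2 ≠ 0 := by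
        intro h0; rw [h0] at h3; simp at h3
      obtain ⟨c, hc⟩ := Multiset.exists_mem_of_ne_zero hT20
      obtain ⟨T3, rfl⟩ := Multiset.exists_cons_of_mem hc
      rw [Multiset.nodup_cons, Multiset.nodup_cons] at hnd
      have hab : a ≠ b := fun h => hnd.1 (h ▸ (by simp))
      have hac : a ≠ c := fun h => hnd.1 (h ▸ (by simp))
      have hbc : b ≠ c := fun h => hnd.2.1 (h ▸ (by simp))
      have hoa := hodd a (by simp)
      have hob := hodd b (by simp)
      have hoc := hodd c (by simp)
      have h2a := h2le a (by simp)
      have h2b := h2le b (by simp)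
      have h2c := h2le c (by simp)
      simp only [Multiset.sum_cons] at hsumle
      omega

lemma hyp_all (hcard : Fintype.card α = 10 ∨ Fintype.card α = 14) (g : Perm α) :
    Even (fT g) ∨ (∃ k ∈ g.cycleType, Even k) ∨ ¬ g.cycleType.Nodup ∨
      2 ≤ g.supportᶜ.card := by
  by_contra hcon
  push_neg at hcon
  obtain ⟨h1, h2, h3, h4⟩ := hcon
  have hsum := sum_cycleType g
  have hsupple : g.support.card ≤ Fintype.card α := by simpa using card_le_univ g.support
  have hcompl : g.supportᶜ.card = Fintype.card α - g.support.card := by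
    rw [card_compl]
  have hodd : ∀ k ∈ g.cycleType, k % 2 = 1 := fun k hk => Nat.not_even_iff.1 (h2 k hk)
  have h2le : ∀ k ∈ g.cycleType, 2 ≤ k := fun k hk => two_le_of_mem_cycleType hk
  have harith := multiset_arith g.cycleType (Fintype.card α) hcard hodd h2le h3
    (by omega) (by omega)
  rw [Nat.even_iff] at h1
  exact h1 harith
lemma main (hcan : CanCycle α) (hcp : CanPair α)
    (hyp : ∀ g : Perm α, Even (fT g) ∨ (∃ k ∈ g.cycleType, Even k) ∨ ¬ g.cycleType.Nodup ∨
      2 ≤ g.supportᶜ.card)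
    (hc6 : 6 ≤ Fintype.card α) {w : Perm α} (hw2 : w ^ 2 = 1) (hw1 : w ≠ 1)
    (hwsign : sign w = 1) (g : alternatingGroup α) :
    ∃ s t : alternatingGroup α, s ^ 2 = 1 ∧ s ≠ 1 ∧ t ^ 2 = 1 ∧ t ≠ 1 ∧ g = s * t := by
  have hgsign : sign (g : Perm α) = 1 := mem_alternatingGroup.1 g.2
  by_cases hg2 : (g : Perm α) ^ 2 = 1
  · by_cases hg1 : (g : Perm α) = 1
    · refine ⟨⟨w, mem_alternatingGroup.2 hwsign⟩, ⟨w, mem_alternatingGroup.2 hwsign⟩,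
        ?_, ?_, ?_, ?_, ?_⟩
      · exact Subtype.ext (by simpa using hw2)
      · exact fun h => hw1 (by simpa using congrArg Subtype.val h)
      · exact Subtype.ext (by simpa using hw2)
      · exact fun h => hw1 (by simpa using congrArg Subtype.val h)
      · refine Subtype.ext ?_
        have : w * w = 1 := by rw [← sq]; exact hw2
        simpa [this] using hg1
    · obtain ⟨s, hcom, hs2, hsig, hs1, hsg⟩ := degenerate hc6 hg1 hg2 hgsign
      have htmem : s * (g : Perm α) ∈ alternatingGroup α := by
        rw [mem_alternatingGroup, map_mul, hsig, hgsign, mul_one]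
      refine ⟨⟨s, mem_alternatingGroup.2 hsig⟩, ⟨s * g, htmem⟩, ?_, ?_, ?_, ?_, ?_⟩
      · exact Subtype.ext (by simpa using hs2)
      · exact fun h => hs1 (by simpa using congrArg Subtype.val h)
      · refine Subtype.ext ?_
        have : (s * (g : Perm α)) ^ 2 = 1 := by
          rw [hcom.mul_pow, hs2, hg2, one_mul]
        simpa using this
      · intro h
        have h' : s * (g : Perm α) = 1 := by simpa using congrArg Subtype.val h
        apply hsg
        have hginv : ((g : Perm α))⁻¹ = g :=
          inv_eq_of_mul_eq_one_right (by rw [← sq]; exact hg2)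
        rw [eq_inv_of_mul_eq_one_left h', hginv]
      · refine Subtype.ext ?_
        show (g : Perm α) = s * (s * g)
        rw [← mul_assoc, ← sq, hs2, one_mul]
  · obtain ⟨s, hrev, hs2, hsig⟩ := exists_even_rev hcan hcp g (hyp g)
    have hsinv : s⁻¹ = s := inv_eq_of_mul_eq_one_right (by rw [← sq]; exact hs2)
    rw [hsinv] at hrev
    have hs1 : s ≠ 1 := by
      intro h
      rw [h, one_mul, mul_one] at hrev
      apply hg2
      rw [sq]
      nth_rewrite 2 [hrev]
      simp
    have htmem : s * (g : Perm α) ∈ alternatingGroup α := by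
      rw [mem_alternatingGroup, map_mul, hsig, hgsign, mul_one]
    refine ⟨⟨s, mem_alternatingGroup.2 hsig⟩, ⟨s * g, htmem⟩, ?_, ?_, ?_, ?_, ?_⟩
    · exact Subtype.ext (by simpa using hs2)
    · exact fun h => hs1 (by simpa using congrArg Subtype.val h)
    · refine Subtype.ext ?_
      have ht2 : (s * (g : Perm α)) ^ 2 = 1 := by
        calc (s * (g : Perm α)) ^ 2 = (s * g * s) * g := by rw [sq]; group
        _ = (g : Perm α)⁻¹ * g := by rw [hrev]
        _ = 1 := by group
      simpa using ht2
    · intro h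
      have h' : s * (g : Perm α) = 1 := by simpa using congrArg Subtype.val h
      apply hg2
      have hseq : s = ((g : Perm α))⁻¹ := eq_inv_of_mul_eq_one_left h'
      have := hs2
      rw [hseq, inv_pow] at this
      exact inv_eq_one.1 this
    · refine Subtype.ext ?_
      show (g : Perm α) = s * (s * g)
      rw [← mul_assoc, ← sq, hs2, one_mul]


lemma canCycle10 : CanCycle (Fin 10) := by
  intro k hk2 hkle
  simp only [Fintype.card_fin] at hkle
  interval_cases k
  · exact ⟨([0,1] : List (Fin 10)).formPerm, (Equiv.swap (0 : Fin 10) 1), List.isCycle_formPerm (by decide) (by decide), by decide, ⟨by decide, by decide, by decide⟩, by decide⟩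
  · exact ⟨([0,1,2] : List (Fin 10)).formPerm, (Equiv.swap (0 : Fin 10) 2), List.isCycle_formPerm (by decide) (by decide), by decide, ⟨by decide, by decide, by decide⟩, by decide⟩
  · exact ⟨([0,1,2,3] : List (Fin 10)).formPerm, (Equiv.swap (0 : Fin 10) 3) * (Equiv.swap (1 : Fin 10) 2), List.isCycle_formPerm (by decide) (by decide), by decide, ⟨by decide, by decide, by decide⟩, by decide⟩
  · exact ⟨([0,1,2,3,4] : List (Fin 10)).formPerm, (Equiv.swap (0 : Fin 10) 4) * (Equiv.swap (1 : Fin 10) 3), List.isCycle_formPerm (by decide) (by decide), by decide, ⟨by decide, by decide, by decide⟩, by decide⟩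
  · exact ⟨([0,1,2,3,4,5] : List (Fin 10)).formPerm, (Equiv.swap (0 : Fin 10) 5) * (Equiv.swap (1 : Fin 10) 4) * (Equiv.swap (2 : Fin 10) 3), List.isCycle_formPerm (by decide) (by decide), by decide, ⟨by decide, by decide, by decide⟩, by decide⟩
  · exact ⟨([0,1,2,3,4,5,6] : List (Fin 10)).formPerm, (Equiv.swap (0 : Fin 10) 6) * (Equiv.swap (1 : Fin 10) 5) * (Equiv.swap (2 : Fin 10) 4), List.isCycle_formPerm (by decide) (by decide), by decide, ⟨by decide, by decide, by decide⟩, by decide⟩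
  · exact ⟨([0,1,2,3,4,5,6,7] : List (Fin 10)).formPerm, (Equiv.swap (0 : Fin 10) 7) * (Equiv.swap (1 : Fin 10) 6) * (Equiv.swap (2 : Fin 10) 5) * (Equiv.swap (3 : Fin 10) 4), List.isCycle_formPerm (by decide) (by decide), by decide, ⟨by decide, by decide, by decide⟩, by decide⟩
  · exact ⟨([0,1,2,3,4,5,6,7,8] : List (Fin 10)).formPerm, (Equiv.swap (0 : Fin 10) 8) * (Equiv.swap (1 : Fin 10) 7) * (Equiv.swap (2 : Fin 10) 6) * (Equiv.swap (3 : Fin 10) 5), List.isCycle_formPerm (by decide) (by decide), by decide, ⟨by decide, by decide, by decide⟩, by decide⟩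
  · exact ⟨([0,1,2,3,4,5,6,7,8,9] : List (Fin 10)).formPerm, (Equiv.swap (0 : Fin 10) 9) * (Equiv.swap (1 : Fin 10) 8) * (Equiv.swap (2 : Fin 10) 7) * (Equiv.swap (3 : Fin 10) 6) * (Equiv.swap (4 : Fin 10) 5), List.isCycle_formPerm (by decide) (by decide), by decide, ⟨by decide, by decide, by decide⟩, by decide⟩

lemma canPair10 : CanPair (Fin 10) := by
  intro k hk2 hkle
  simp only [Fintype.card_fin] at hkle
  have hk5 : k ≤ 5 := by omega
  interval_cases k
  · refine ⟨([0,1] : List (Fin 10)).formPerm * ([2,3] : List (Fin 10)).formPerm, (Equiv.swap (0 : Fin 10) 3) * (Equiv.swap (1 : Fin 10) 2), ?_, ⟨by decide, by decide, by decide⟩, by decide⟩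
    rw [Equiv.Perm.Disjoint.cycleType_mul (disjoint_iff_disjoint_support.mpr (by decide)), (List.isCycle_formPerm (by decide) (by decide)).cycleType,
      (List.isCycle_formPerm (by decide) (by decide)).cycleType]
    decide
  · refine ⟨([0,1,2] : List (Fin 10)).formPerm * ([3,4,5] : List (Fin 10)).formPerm, (Equiv.swap (0 : Fin 10) 5) * (Equiv.swap (1 : Fin 10) 4) * (Equiv.swap (2 : Fin 10) 3), ?_, ⟨by decide, by decide, by decide⟩, by decide⟩
    rw [Equiv.Perm.Disjoint.cycleType_mul (disjoint_iff_disjoint_support.mpr (by decide)), (List.isCycle_formPerm (by decide) (by decide)).cycleType,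
      (List.isCycle_formPerm (by decide) (by decide)).cycleType]
    decide
  · refine ⟨([0,1,2,3] : List (Fin 10)).formPerm * ([4,5,6,7] : List (Fin 10)).formPerm, (Equiv.swap (0 : Fin 10) 7) * (Equiv.swap (1 : Fin 10) 6) * (Equiv.swap (2 : Fin 10) 5) * (Equiv.swap (3 : Fin 10) 4), ?_, ⟨by decide, by decide, by decide⟩, by decide⟩
    rw [Equiv.Perm.Disjoint.cycleType_mul (disjoint_iff_disjoint_support.mpr (by decide)), (List.isCycle_formPerm (by decide) (by decide)).cycleType,
      (List.isCycle_formPerm (by decide) (by decide)).cycleType]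
    decide
  · refine ⟨([0,1,2,3,4] : List (Fin 10)).formPerm * ([5,6,7,8,9] : List (Fin 10)).formPerm, (Equiv.swap (0 : Fin 10) 9) * (Equiv.swap (1 : Fin 10) 8) * (Equiv.swap (2 : Fin 10) 7) * (Equiv.swap (3 : Fin 10) 6) * (Equiv.swap (4 : Fin 10) 5), ?_, ⟨by decide, by decide, by decide⟩, by decide⟩
    rw [Equiv.Perm.Disjoint.cycleType_mul (disjoint_iff_disjoint_support.mpr (by decide)), (List.isCycle_formPerm (by decide) (by decide)).cycleType,
      (List.isCycle_formPerm (by decide) (by decide)).cycleType]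
    decide
lemma canCycle14 : CanCycle (Fin 14) := by
  intro k hk2 hkle
  simp only [Fintype.card_fin] at hkle
  interval_cases k
  · exact ⟨([0,1] : List (Fin 14)).formPerm, (Equiv.swap (0 : Fin 14) 1), List.isCycle_formPerm (by decide) (by decide), by decide, ⟨by decide, by decide, by decide⟩, by decide⟩
  · exact ⟨([0,1,2] : List (Fin 14)).formPerm, (Equiv.swap (0 : Fin 14) 2), List.isCycle_formPerm (by decide) (by decide), by decide, ⟨by decide, by decide, by decide⟩, by decide⟩
  · exact ⟨([0,1,2,3] : List (Fin 14)).formPerm, (Equiv.swap (0 : Fin 14) 3) * (Equiv.swap (1 : Fin 14) 2), List.isCycle_formPerm (by decide) (by decide), by decide, ⟨by decide, by decide, by decide⟩, by decide⟩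
  · exact ⟨([0,1,2,3,4] : List (Fin 14)).formPerm, (Equiv.swap (0 : Fin 14) 4) * (Equiv.swap (1 : Fin 14) 3), List.isCycle_formPerm (by decide) (by decide), by decide, ⟨by decide, by decide, by decide⟩, by decide⟩
  · exact ⟨([0,1,2,3,4,5] : List (Fin 14)).formPerm, (Equiv.swap (0 : Fin 14) 5) * (Equiv.swap (1 : Fin 14) 4) * (Equiv.swap (2 : Fin 14) 3), List.isCycle_formPerm (by decide) (by decide), by decide, ⟨by decide, by decide, by decide⟩, by decide⟩
  · exact ⟨([0,1,2,3,4,5,6] : List (Fin 14)).formPerm, (Equiv.swap (0 : Fin 14) 6) * (Equiv.swap (1 : Fin 14) 5) * (Equiv.swap (2 : Fin 14) 4), List.isCycle_formPerm (by decide) (by decide), by decide, ⟨by decide, by decide, by decide⟩, by decide⟩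
  · exact ⟨([0,1,2,3,4,5,6,7] : List (Fin 14)).formPerm, (Equiv.swap (0 : Fin 14) 7) * (Equiv.swap (1 : Fin 14) 6) * (Equiv.swap (2 : Fin 14) 5) * (Equiv.swap (3 : Fin 14) 4), List.isCycle_formPerm (by decide) (by decide), by decide, ⟨by decide, by decide, by decide⟩, by decide⟩
  · exact ⟨([0,1,2,3,4,5,6,7,8] : List (Fin 14)).formPerm, (Equiv.swap (0 : Fin 14) 8) * (Equiv.swap (1 : Fin 14) 7) * (Equiv.swap (2 : Fin 14) 6) * (Equiv.swap (3 : Fin 14) 5), List.isCycle_formPerm (by decide) (by decide), by decide, ⟨by decide, by decide, by decide⟩, by decide⟩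
  · exact ⟨([0,1,2,3,4,5,6,7,8,9] : List (Fin 14)).formPerm, (Equiv.swap (0 : Fin 14) 9) * (Equiv.swap (1 : Fin 14) 8) * (Equiv.swap (2 : Fin 14) 7) * (Equiv.swap (3 : Fin 14) 6) * (Equiv.swap (4 : Fin 14) 5), List.isCycle_formPerm (by decide) (by decide), by decide, ⟨by decide, by decide, by decide⟩, by decide⟩
  · exact ⟨([0,1,2,3,4,5,6,7,8,9,10] : List (Fin 14)).formPerm, (Equiv.swap (0 : Fin 14) 10) * (Equiv.swap (1 : Fin 14) 9) * (Equiv.swap (2 : Fin 14) 8) * (Equiv.swap (3 : Fin 14) 7) * (Equiv.swap (4 : Fin 14) 6), List.isCycle_formPerm (by decide) (by decide), by decide, ⟨by decide, by decide, by decide⟩, by decide⟩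
  · exact ⟨([0,1,2,3,4,5,6,7,8,9,10,11] : List (Fin 14)).formPerm, (Equiv.swap (0 : Fin 14) 11) * (Equiv.swap (1 : Fin 14) 10) * (Equiv.swap (2 : Fin 14) 9) * (Equiv.swap (3 : Fin 14) 8) * (Equiv.swap (4 : Fin 14) 7) * (Equiv.swap (5 : Fin 14) 6), List.isCycle_formPerm (by decide) (by decide), by decide, ⟨by decide, by decide, by decide⟩, by decide⟩
  · exact ⟨([0,1,2,3,4,5,6,7,8,9,10,11,12] : List (Fin 14)).formPerm, (Equiv.swap (0 : Fin 14) 12) * (Equiv.swap (1 : Fin 14) 11) * (Equiv.swap (2 : Fin 14) 10) * (Equiv.swap (3 : Fin 14) 9) * (Equiv.swap (4 : Fin 14) 8) * (Equiv.swap (5 : Fin 14) 7), List.isCycle_formPerm (by decide) (by decide), by decide, ⟨by decide, by decide, by decide⟩, by decide⟩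
  · exact ⟨([0,1,2,3,4,5,6,7,8,9,10,11,12,13] : List (Fin 14)).formPerm, (Equiv.swap (0 : Fin 14) 13) * (Equiv.swap (1 : Fin 14) 12) * (Equiv.swap (2 : Fin 14) 11) * (Equiv.swap (3 : Fin 14) 10) * (Equiv.swap (4 : Fin 14) 9) * (Equiv.swap (5 : Fin 14) 8) * (Equiv.swap (6 : Fin 14) 7), List.isCycle_formPerm (by decide) (by decide), by decide, ⟨by decide, by decide, by decide⟩, by decide⟩

lemma canPair14 : CanPair (Fin 14) := by
  intro k hk2 hkle
  simp only [Fintype.card_fin] at hkle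
  have hk' : k ≤ 7 := by omega
  interval_cases k
  · refine ⟨([0,1] : List (Fin 14)).formPerm * ([2,3] : List (Fin 14)).formPerm, (Equiv.swap (0 : Fin 14) 3) * (Equiv.swap (1 : Fin 14) 2), ?_, ⟨by decide, by decide, by decide⟩, by decide⟩
    rw [Equiv.Perm.Disjoint.cycleType_mul (disjoint_iff_disjoint_support.mpr (by decide)), (List.isCycle_formPerm (by decide) (by decide)).cycleType,
      (List.isCycle_formPerm (by decide) (by decide)).cycleType]
    decide
  · refine ⟨([0,1,2] : List (Fin 14)).formPerm * ([3,4,5] : List (Fin 14)).formPerm, (Equiv.swap (0 : Fin 14) 5) * (Equiv.swap (1 : Fin 14) 4) * (Equiv.swap (2 : Fin 14) 3), ?_, ⟨by decide, by decide, by decide⟩, by decide⟩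
    rw [Equiv.Perm.Disjoint.cycleType_mul (disjoint_iff_disjoint_support.mpr (by decide)), (List.isCycle_formPerm (by decide) (by decide)).cycleType,
      (List.isCycle_formPerm (by decide) (by decide)).cycleType]
    decide
  · refine ⟨([0,1,2,3] : List (Fin 14)).formPerm * ([4,5,6,7] : List (Fin 14)).formPerm, (Equiv.swap (0 : Fin 14) 7) * (Equiv.swap (1 : Fin 14) 6) * (Equiv.swap (2 : Fin 14) 5) * (Equiv.swap (3 : Fin 14) 4), ?_, ⟨by decide, by decide, by decide⟩, by decide⟩
    rw [Equiv.Perm.Disjoint.cycleType_mul (disjoint_iff_disjoint_support.mpr (by decide)), (List.isCycle_formPerm (by decide) (by decide)).cycleType,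
      (List.isCycle_formPerm (by decide) (by decide)).cycleType]
    decide
  · refine ⟨([0,1,2,3,4] : List (Fin 14)).formPerm * ([5,6,7,8,9] : List (Fin 14)).formPerm, (Equiv.swap (0 : Fin 14) 9) * (Equiv.swap (1 : Fin 14) 8) * (Equiv.swap (2 : Fin 14) 7) * (Equiv.swap (3 : Fin 14) 6) * (Equiv.swap (4 : Fin 14) 5), ?_, ⟨by decide, by decide, by decide⟩, by decide⟩
    rw [Equiv.Perm.Disjoint.cycleType_mul (disjoint_iff_disjoint_support.mpr (by decide)), (List.isCycle_formPerm (by decide) (by decide)).cycleType,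
      (List.isCycle_formPerm (by decide) (by decide)).cycleType]
    decide
  · refine ⟨([0,1,2,3,4,5] : List (Fin 14)).formPerm * ([6,7,8,9,10,11] : List (Fin 14)).formPerm, (Equiv.swap (0 : Fin 14) 11) * (Equiv.swap (1 : Fin 14) 10) * (Equiv.swap (2 : Fin 14) 9) * (Equiv.swap (3 : Fin 14) 8) * (Equiv.swap (4 : Fin 14) 7) * (Equiv.swap (5 : Fin 14) 6), ?_, ⟨by decide, by decide, by decide⟩, by decide⟩
    rw [Equiv.Perm.Disjoint.cycleType_mul (disjoint_iff_disjoint_support.mpr (by decide)), (List.isCycle_formPerm (by decide) (by decide)).cycleType,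
      (List.isCycle_formPerm (by decide) (by decide)).cycleType]
    decide
  · refine ⟨([0,1,2,3,4,5,6] : List (Fin 14)).formPerm * ([7,8,9,10,11,12,13] : List (Fin 14)).formPerm, (Equiv.swap (0 : Fin 14) 13) * (Equiv.swap (1 : Fin 14) 12) * (Equiv.swap (2 : Fin 14) 11) * (Equiv.swap (3 : Fin 14) 10) * (Equiv.swap (4 : Fin 14) 9) * (Equiv.swap (5 : Fin 14) 8) * (Equiv.swap (6 : Fin 14) 7), ?_, ⟨by decide, by decide, by decide⟩, by decide⟩
    rw [Equiv.Perm.Disjoint.cycleType_mul (disjoint_iff_disjoint_support.mpr (by decide)), (List.isCycle_formPerm (by decide) (by decide)).cycleType,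
      (List.isCycle_formPerm (by decide) (by decide)).cycleType]
    decide

end A1014

open A1014 in
/-- Every element of `A₁₀` is a product of two involutions of `A₁₀`, and every
element of `A₁₄` is a product of two involutions of `A₁₄`. -/
theorem a10_a14_product_of_two_involutions :
    (∀ g : alternatingGroup (Fin 10), ∃ s t : alternatingGroup (Fin 10),
        s ^ 2 = 1 ∧ s ≠ 1 ∧ t ^ 2 = 1 ∧ t ≠ 1 ∧ g = s * t) ∧
    (∀ g : alternatingGroup (Fin 14), ∃ s t : alternatingGroup (Fin 14),
        s ^ 2 = 1 ∧ s ≠ 1 ∧ t ^ 2 = 1 ∧ t ≠ 1 ∧ g = s * t) := by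
  constructor
  · intro g
    exact main canCycle10 canPair10 (hyp_all (Or.inl (by simp)))
      (by simp) (w := (Equiv.swap (0 : Fin 10) 1) * (Equiv.swap (2 : Fin 10) 3))
      (by decide) (by decide) (by decide) g
  · intro g
    exact main canCycle14 canPair14 (hyp_all (Or.inr (by simp)))
      (by simp) (w := (Equiv.swap (0 : Fin 14) 1) * (Equiv.swap (2 : Fin 14) 3))
      (by decide) (by decide) (by decide) g
end

section
/- Let q be a prime power with q ≡ 3 (mod 4) and let F be a finite field with q elements. Then there exists an element of PSL₂(F) = SL₂(F)/Z(SL₂(F)) that is not conjugate to its inverse by any involution of PSL₂(F); in particular PSL₂(F) is not strongly real. -/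
open Matrix

/-- If `q ≡ 3 (mod 4)` then some element of `PSL₂(F_q)` is not inverted by any
involution; in particular `PSL₂(F_q)` is not strongly real. -/
theorem psl2_not_strongly_real_of_three_mod_four {q : ℕ} (hq : IsPrimePow q)
    (hq3 : q % 4 = 3)
    (F : Type*) [Field F] [Fintype F] [DecidableEq F] (hF : Fintype.card F = q) :
    ∃ g : ProjectiveSpecialLinearGroup (Fin 2) F,
      ∀ t : ProjectiveSpecialLinearGroup (Fin 2) F,
        t ^ 2 = 1 → t ≠ 1 → t⁻¹ * g * t ≠ g⁻¹ := by
  -- `-1` is not a square in `F`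
  have hns : ¬ IsSquare (-1 : F) := by
    rw [FiniteField.isSquare_neg_one_iff, hF, hq3]
    simp
  have h2 : (2 : F) ≠ 0 := by
    intro h2
    apply hns
    have : (-1 : F) = 1 := by linear_combination -h2
    rw [this]
    exact ⟨1, (one_mul 1).symm⟩
  -- the unipotent element
  set A : Matrix.SpecialLinearGroup (Fin 2) F :=
    ⟨!![1, 1; 0, 1], by simp [Matrix.det_fin_two_of]⟩ with hA
  refine ⟨QuotientGroup.mk A, fun t _ _ h => ?_⟩
  obtain ⟨T, rfl⟩ := QuotientGroup.mk_surjective t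
  rw [← QuotientGroup.mk_inv, ← QuotientGroup.mk_mul, ← QuotientGroup.mk_mul,
    ← QuotientGroup.mk_inv, QuotientGroup.eq] at h
  obtain ⟨r, hr2, hr⟩ := Matrix.SpecialLinearGroup.mem_center_iff.mp h
  have hrr : r * r = 1 := by
    have h' : r ^ 2 = 1 := by simpa using hr2
    rw [← pow_two]; exact h'
  -- package the scalar matrix as an element of SL₂
  set Z : Matrix.SpecialLinearGroup (Fin 2) F :=
    ⟨Matrix.scalar (Fin 2) r, by
      rw [Matrix.scalar_apply, Matrix.det_diagonal]
      simp only [Fin.prod_univ_two]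
      exact hrr⟩ with hZ
  have h1 : (T⁻¹ * A * T)⁻¹ * A⁻¹ = Z := Subtype.ext hr.symm
  have h3 : T * A⁻¹ = A * T * Z := by
    have haux : (T⁻¹ * A * T) * ((T⁻¹ * A * T)⁻¹ * A⁻¹) = (T⁻¹ * A * T) * Z := by rw [h1]
    calc T * A⁻¹ = T * ((T⁻¹ * A * T) * ((T⁻¹ * A * T)⁻¹ * A⁻¹)) := by group
      _ = T * ((T⁻¹ * A * T) * Z) := by rw [haux]
      _ = A * T * Z := by group
  have key : (T : Matrix (Fin 2) (Fin 2) F) *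
      ((A⁻¹ : Matrix.SpecialLinearGroup (Fin 2) F) : Matrix (Fin 2) (Fin 2) F) =
      (A : Matrix (Fin 2) (Fin 2) F) * T * Matrix.scalar (Fin 2) r := by
    have := congrArg (fun X : Matrix.SpecialLinearGroup (Fin 2) F =>
      (X : Matrix (Fin 2) (Fin 2) F)) h3
    rw [Matrix.SpecialLinearGroup.coe_mul, Matrix.SpecialLinearGroup.coe_mul] at this
    simpa [hZ] using this
  -- explicit inverse of A
  have hAinv : ((A⁻¹ : Matrix.SpecialLinearGroup (Fin 2) F) : Matrix (Fin 2) (Fin 2) F) =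
      !![1, -1; 0, 1] := by
    rw [Matrix.SpecialLinearGroup.SL2_inv_expl]
    ext i j
    fin_cases i <;> fin_cases j <;> simp [hA]
  rw [hAinv] at key
  set a := (T : Matrix (Fin 2) (Fin 2) F) 0 0 with ha
  set b := (T : Matrix (Fin 2) (Fin 2) F) 0 1 with hb
  set c := (T : Matrix (Fin 2) (Fin 2) F) 1 0 with hc
  set d := (T : Matrix (Fin 2) (Fin 2) F) 1 1 with hd
  have e00 := congr_fun₂ key 0 0
  have e01 := congr_fun₂ key 0 1
  have e10 := congr_fun₂ key 1 0
  have e11 := congr_fun₂ key 1 1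
  simp only [hA, Matrix.mul_apply, Fin.sum_univ_two, Matrix.scalar_apply,
    Matrix.diagonal_apply, Matrix.cons_val', Matrix.cons_val_zero, Matrix.cons_val_one,
    Matrix.head_cons, Matrix.head_fin_const, Matrix.empty_val', Matrix.cons_val_fin_one,
    Matrix.diagonal_apply_eq, Matrix.diagonal_apply_ne, ← ha, ← hb, ← hc, ← hd] at e00 e01 e10 e11
  norm_num at e00 e01 e10 e11
  have hdet : a * d - b * c = 1 := by
    have hT := T.2
    rw [Matrix.det_fin_two] at hT
    rw [← ha, ← hb, ← hc, ← hd] at hT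
    exact hT
  have hr' : r = 1 ∨ r = -1 := mul_self_eq_one_iff.mp hrr
  rcases hr' with rfl | rfl
  · -- r = 1 : c = 0, d = -a, det gives -a² = 1
    apply hns
    refine ⟨a, ?_⟩
    have hc0 : c = 0 := by linear_combination -e00
    have hda : d = -a := by linear_combination -e01
    rw [hc0, hda] at hdet
    linear_combination hdet
  · -- r = -1 : a = c = d = 0, contradiction with det = 1
    have hc0 : c = 0 := by
      have h2c : 2 * c = 0 := by linear_combination e10
      rcases mul_eq_zero.mp h2c with hx | hx
      · exact absurd hx h2
      · exact hx
    have ha0 : a = 0 := by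
      have h2a : 2 * a = 0 := by linear_combination e00 - hc0
      rcases mul_eq_zero.mp h2a with hx | hx
      · exact absurd hx h2
      · exact hx
    have hd0 : d = 0 := by
      have h2d : 2 * d = 0 := by linear_combination e11 + hc0
      rcases mul_eq_zero.mp h2d with hx | hx
      · exact absurd hx h2
      · exact hx
    rw [ha0, hc0, hd0] at hdet
    simp at hdet
end

section
/- Let q be a prime power with q ≡ 1 (mod 4) and let F be a finite field with q elements. Then PSL₂(F) = SL₂(F)/Z(SL₂(F)) is strongly real: every element of PSL₂(F) is conjugate to its inverse by an involution of PSL₂(F). -/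
open Matrix

private lemma sl2_conj_aux {F : Type*} [Field F] (i : F) (hi : i * i = -1)
    (A : Matrix.SpecialLinearGroup (Fin 2) F) :
    ∃ t : Matrix.SpecialLinearGroup (Fin 2) F,
      (t : Matrix (Fin 2) (Fin 2) F) * (t : Matrix (Fin 2) (Fin 2) F) = -1 ∧
      t * A = A⁻¹ * t := by
  have hdet : A.1 0 0 * A.1 1 1 - A.1 0 1 * A.1 1 0 = 1 := by
    have h2 := A.2
    rwa [Matrix.det_fin_two] at h2
  by_cases hc : A.1 1 0 ≠ 0
  · refine ⟨⟨!![i, i * (A.1 1 1 - A.1 0 0) / (A.1 1 0); 0, -i], ?_⟩, ?_, ?_⟩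
    · rw [Matrix.det_fin_two_of]
      linear_combination -hi
    · ext x y
      fin_cases x <;> fin_cases y
      all_goals (try simp [Matrix.mul_apply, Fin.sum_univ_two])
      all_goals (first | linear_combination hi | ring1)
    · apply Subtype.ext
      erw [Matrix.SpecialLinearGroup.coe_mul, Matrix.SpecialLinearGroup.coe_mul,
        Matrix.SpecialLinearGroup.coe_inv, Matrix.eta_fin_two A.1, Matrix.adjugate_fin_two_of]
      ext x y
      fin_cases x <;> fin_cases y
      all_goals (try simp [Matrix.mul_apply, Fin.sum_univ_two])
      all_goals (try (field_simp; try ring_nf))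
      all_goals (first | linear_combination hi | ring1)
  · push_neg at hc
    by_cases hb : A.1 0 1 ≠ 0
    · refine ⟨⟨!![i, 0; i * (A.1 1 1 - A.1 0 0) / (A.1 0 1), -i], ?_⟩, ?_, ?_⟩
      · rw [Matrix.det_fin_two_of]
        linear_combination -hi
      · ext x y
        fin_cases x <;> fin_cases y
        all_goals (try simp [Matrix.mul_apply, Fin.sum_univ_two])
        all_goals (first | linear_combination hi | ring1)
      · apply Subtype.ext
        erw [Matrix.SpecialLinearGroup.coe_mul, Matrix.SpecialLinearGroup.coe_mul,
          Matrix.SpecialLinearGroup.coe_inv, Matrix.eta_fin_two A.1, Matrix.adjugate_fin_two_of]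
        ext x y
        fin_cases x <;> fin_cases y
        all_goals (try simp [Matrix.mul_apply, Fin.sum_univ_two, hc])
        all_goals (try (field_simp; try ring_nf))
        all_goals (first | linear_combination hi | ring1)
    · push_neg at hb
      by_cases had : A.1 0 0 = A.1 1 1
      · refine ⟨⟨!![i, 0; 0, -i], ?_⟩, ?_, ?_⟩
        · rw [Matrix.det_fin_two_of]
          linear_combination -hi
        · ext x y
          fin_cases x <;> fin_cases y
          all_goals (try simp [Matrix.mul_apply, Fin.sum_univ_two])
          all_goals (first | linear_combination hi | ring1)
        · apply Subtype.ext
          erw [Matrix.SpecialLinearGroup.coe_mul, Matrix.SpecialLinearGroup.coe_mul,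
            Matrix.SpecialLinearGroup.coe_inv, Matrix.eta_fin_two A.1, Matrix.adjugate_fin_two_of]
          ext x y
          fin_cases x <;> fin_cases y
          all_goals (try simp [Matrix.mul_apply, Fin.sum_univ_two, hb, hc, had])
          all_goals (first | linear_combination hi | linear_combination i * had | ring1)
      · refine ⟨⟨!![0, 1; -1, 0], ?_⟩, ?_, ?_⟩
        · rw [Matrix.det_fin_two_of]; ring
        · ext x y
          fin_cases x <;> fin_cases y
          all_goals (try simp [Matrix.mul_apply, Fin.sum_univ_two])
          all_goals (first | linear_combination hi | ring1)
        · apply Subtype.ext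
          erw [Matrix.SpecialLinearGroup.coe_mul, Matrix.SpecialLinearGroup.coe_mul,
            Matrix.SpecialLinearGroup.coe_inv, Matrix.eta_fin_two A.1, Matrix.adjugate_fin_two_of]
          ext x y
          fin_cases x <;> fin_cases y
          all_goals (try simp [Matrix.mul_apply, Fin.sum_univ_two, hb, hc])
          all_goals (first | linear_combination hi | ring1)

/-- If `q ≡ 1 (mod 4)` then `PSL₂(F_q)` is strongly real: every element is
conjugate to its inverse by an involution. -/
theorem psl2_strongly_real_of_one_mod_four {q : ℕ} (hq : IsPrimePow q)
    (hq1 : q % 4 = 1)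
    (F : Type*) [Field F] [Fintype F] [DecidableEq F] (hF : Fintype.card F = q) :
    ∀ g : ProjectiveSpecialLinearGroup (Fin 2) F,
      ∃ t : ProjectiveSpecialLinearGroup (Fin 2) F,
        t ^ 2 = 1 ∧ t ≠ 1 ∧ t⁻¹ * g * t = g⁻¹ := by
  intro g
  have hq2 : Fintype.card F % 4 ≠ 3 := by rw [hF, hq1]; omega
  obtain ⟨i, hi⟩ := FiniteField.isSquare_neg_one_iff.mpr hq2
  have hchar : ringChar F ≠ 2 := by
    intro h
    have h2 := FiniteField.even_card_iff_char_two.mp h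
    rw [hF] at h2
    omega
  have hne : (-1 : F) ≠ 1 := Ring.neg_one_ne_one_of_char_ne_two hchar
  obtain ⟨A, rfl⟩ := QuotientGroup.mk_surjective g
  obtain ⟨t, ht1, ht2⟩ := sl2_conj_aux i hi.symm A
  have hconj : t⁻¹ * A * t = A⁻¹ := by
    have h3 : t⁻¹ * A = A⁻¹ * t⁻¹ := by
      have h4 := congrArg Inv.inv ht2
      simpa [_root_.mul_inv_rev] using h4.symm
    rw [h3, mul_assoc, inv_mul_cancel, mul_one]
  refine ⟨QuotientGroup.mk t, ?_, ?_, ?_⟩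
  · rw [← QuotientGroup.mk_pow, QuotientGroup.eq_one_iff]
    rw [Matrix.SpecialLinearGroup.mem_center_iff]
    refine ⟨-1, by simp, ?_⟩
    have hco : ((t ^ 2 : Matrix.SpecialLinearGroup (Fin 2) F) : Matrix (Fin 2) (Fin 2) F)
        = -1 := by
      rw [pow_two, Matrix.SpecialLinearGroup.coe_mul, ht1]
    rw [hco]
    ext x y
    fin_cases x <;> fin_cases y <;> simp [Matrix.scalar]
  · intro h
    rw [QuotientGroup.eq_one_iff, Matrix.SpecialLinearGroup.mem_center_iff] at h
    obtain ⟨r, hr, hsc⟩ := h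
    have hm : (-1 : Matrix (Fin 2) (Fin 2) F) = 1 := by
      rw [← ht1, ← hsc, ← _root_.map_mul]
      have hrr : r * r = 1 := by rw [← pow_two]; simpa using hr
      rw [hrr]
      simp
    have h5 : (-1 : F) = 1 := by simpa using congr_fun (congr_fun hm 0) 0
    exact hne h5
  · rw [← QuotientGroup.mk_inv, ← QuotientGroup.mk_mul, ← QuotientGroup.mk_mul, hconj,
      QuotientGroup.mk_inv]
end
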